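/- Let X be a Banach space whose numerical index equals 1. If the pair (X, X) has the Bishop–Phelps–Bollobás–Zizler property (BPBZp) and X has property (nu), then X has the Bishop–Phelps–Bollobás property for the numerical radius (BPBp-nu). -/
import Mathlib


/-- The numerical radius of a bounded linear operator on a normed space. -/
noncomputable def numRadius {𝕂 : Type*} [RCLike 𝕂] {Z : Type*} [NormedAddCommGroup Z]
    [NormedSpace 𝕂 Z] (T : Z →L[𝕂] Z) : ℝ :=
  sSup { r : ℝ | ∃ (z : Z) (f : Z →L[𝕂] 𝕂), ‖z‖ = 1 ∧ ‖f‖ = 1 ∧ f z = 1 ∧ r = ‖f (T z)‖ }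

/-- The numerical index of a normed space. -/
noncomputable def numIndex (𝕂 : Type*) [RCLike 𝕂] (Z : Type*) [NormedAddCommGroup Z]
    [NormedSpace 𝕂 Z] : ℝ :=
  sInf { r : ℝ | ∃ T : Z →L[𝕂] Z, ‖T‖ = 1 ∧ r = numRadius T }

/-- The Bishop–Phelps–Bollobás–Zizler property (BPBZp) for a pair of normed spaces. -/
def BPBZp (𝕂 : Type*) [RCLike 𝕂] (X Y : Type*) [NormedAddCommGroup X] [NormedSpace 𝕂 X]
    [NormedAddCommGroup Y] [NormedSpace 𝕂 Y] : Prop :=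
  ∀ ε : ℝ, 0 < ε → ∃ η : ℝ, 0 < η ∧
    ∀ (T : X →L[𝕂] Y) (x₀ : X) (y₀ : Y →L[𝕂] 𝕂),
      ‖T‖ = 1 → ‖x₀‖ = 1 → ‖y₀‖ = 1 → 1 - η < ‖y₀ (T x₀)‖ →
      ∃ (S : X →L[𝕂] Y) (x₁ : X) (y₁ : Y →L[𝕂] 𝕂),
        ‖S‖ = 1 ∧ ‖x₁‖ = 1 ∧ ‖y₁‖ = 1 ∧ ‖y₁ (S x₁)‖ = 1 ∧
        ‖x₁ - x₀‖ < ε ∧ ‖y₁ - y₀‖ < ε ∧ ‖S - T‖ < ε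

/-- Property (nu) for a normed space. -/
def PropertyNu (𝕂 : Type*) [RCLike 𝕂] (X : Type*) [NormedAddCommGroup X]
    [NormedSpace 𝕂 X] : Prop :=
  ∀ ε : ℝ, 0 < ε → ∃ η : ℝ, 0 < η ∧
    ∀ (T : X →L[𝕂] X) (x₀ : X) (f₀ : X →L[𝕂] 𝕂),
      ‖T‖ = 1 → ‖x₀‖ = 1 → ‖f₀‖ = 1 → 1 - η < RCLike.re (f₀ x₀) → ‖f₀ (T x₀)‖ = 1 →
      ∃ (S : X →L[𝕂] X) (x₁ : X) (f₁ : X →L[𝕂] 𝕂),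
        ‖S‖ = 1 ∧ ‖x₁‖ = 1 ∧ ‖f₁‖ = 1 ∧ ‖f₁ (S x₁)‖ = 1 ∧ f₁ x₁ = 1 ∧
        ‖x₁ - x₀‖ < ε ∧ ‖f₁ - f₀‖ < ε ∧ ‖S - T‖ < ε

/-- The Bishop–Phelps–Bollobás property for the numerical radius (BPBp-nu). -/
def BPBpNu (𝕂 : Type*) [RCLike 𝕂] (Z : Type*) [NormedAddCommGroup Z]
    [NormedSpace 𝕂 Z] : Prop :=
  ∀ ε : ℝ, 0 < ε → ε < 1 → ∃ η : ℝ, 0 < η ∧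
    ∀ (T : Z →L[𝕂] Z) (z₀ : Z) (f₀ : Z →L[𝕂] 𝕂),
      numRadius T = 1 → ‖z₀‖ = 1 → ‖f₀‖ = 1 → f₀ z₀ = 1 → 1 - η < ‖f₀ (T z₀)‖ →
      ∃ (S : Z →L[𝕂] Z) (z₁ : Z) (f₁ : Z →L[𝕂] 𝕂),
        ‖z₁‖ = 1 ∧ ‖f₁‖ = 1 ∧ f₁ z₁ = 1 ∧ numRadius S = 1 ∧ ‖f₁ (S z₁)‖ = 1 ∧
        ‖S - T‖ < ε ∧ ‖z₁ - z₀‖ < ε ∧ ‖f₁ - f₀‖ < ε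

section Aux

variable {𝕂 : Type*} [RCLike 𝕂] {Z : Type*} [NormedAddCommGroup Z] [NormedSpace 𝕂 Z]

lemma numRadius_nonneg (T : Z →L[𝕂] Z) : 0 ≤ numRadius T :=
  Real.sSup_nonneg (by rintro r ⟨z, f, hz, hf, hfz, rfl⟩; positivity)

lemma numRadius_le_norm (T : Z →L[𝕂] Z) : numRadius T ≤ ‖T‖ := by
  apply Real.sSup_le _ (norm_nonneg T)
  rintro r ⟨z, f, hz, hf, hfz, rfl⟩
  calc ‖f (T z)‖ ≤ ‖f‖ * ‖T z‖ := f.le_opNorm _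
    _ ≤ ‖f‖ * (‖T‖ * ‖z‖) := by
        have := T.le_opNorm z
        have h0 : (0:ℝ) ≤ ‖f‖ := norm_nonneg f
        nlinarith
    _ = ‖T‖ := by rw [hz, hf]; ring

lemma le_numRadius (T : Z →L[𝕂] Z) {z : Z} {f : Z →L[𝕂] 𝕂}
    (hz : ‖z‖ = 1) (hf : ‖f‖ = 1) (hfz : f z = 1) : ‖f (T z)‖ ≤ numRadius T := by
  apply le_csSup
  · refine ⟨‖T‖, ?_⟩
    rintro r ⟨w, g, hw, hg, hgw, rfl⟩
    calc ‖g (T w)‖ ≤ ‖g‖ * ‖T w‖ := g.le_opNorm _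
      _ ≤ ‖g‖ * (‖T‖ * ‖w‖) := by
          have := T.le_opNorm w
          have h0 : (0:ℝ) ≤ ‖g‖ := norm_nonneg g
          nlinarith
      _ = ‖T‖ := by rw [hw, hg]; ring
  · exact ⟨z, f, hz, hf, hfz, rfl⟩

lemma numRadius_smul_le (a : 𝕂) (T : Z →L[𝕂] Z) :
    numRadius (a • T) ≤ ‖a‖ * numRadius T := by
  apply Real.sSup_le _ (mul_nonneg (norm_nonneg a) (numRadius_nonneg T))
  rintro r ⟨z, f, hz, hf, hfz, rfl⟩
  have h1 : f ((a • T) z) = a * f (T z) := by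
    simp [ContinuousLinearMap.smul_apply, map_smul, smul_eq_mul]
  rw [h1, norm_mul]
  have := le_numRadius T hz hf hfz
  have h0 : (0:ℝ) ≤ ‖a‖ := norm_nonneg a
  nlinarith

lemma one_le_numRadius (hX : numIndex 𝕂 Z = 1) (T : Z →L[𝕂] Z) (hT : ‖T‖ = 1) :
    1 ≤ numRadius T := by
  rw [← hX]
  refine csInf_le ⟨0, ?_⟩ ⟨T, hT, rfl⟩
  rintro r ⟨S, hS, rfl⟩
  exact numRadius_nonneg S

lemma norm_eq_one_of_numRadius_eq_one (hX : numIndex 𝕂 Z = 1) (T : Z →L[𝕂] Z)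
    (hT : numRadius T = 1) : ‖T‖ = 1 := by
  have h1 : (1:ℝ) ≤ ‖T‖ := hT ▸ numRadius_le_norm T
  set c := ‖T‖ with hc
  have hcpos : 0 < c := lt_of_lt_of_le one_pos h1
  have hT' : ‖((c⁻¹ : ℝ) : 𝕂) • T‖ = 1 := by
    rw [norm_smul ((c⁻¹ : ℝ) : 𝕂) T, RCLike.norm_ofReal, abs_of_nonneg (inv_nonneg.2 hcpos.le), ← hc,
      inv_mul_cancel₀ hcpos.ne']
  have h2 := one_le_numRadius hX _ hT'
  have h3 := numRadius_smul_le ((c⁻¹ : ℝ) : 𝕂) T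
  rw [hT, RCLike.norm_ofReal, abs_of_nonneg (inv_nonneg.2 hcpos.le), mul_one] at h3
  have h4 : (1:ℝ) ≤ c⁻¹ := h2.trans h3
  have h5 : c ≤ 1 := by
    have := (one_le_inv_iff₀ (a := c)).mp h4
    exact this.2
  linarith

end Aux

/-- If `n(X) = 1`, the pair `(X, X)` has the BPBZp and `X` has property (nu), then `X` has
the BPBp-nu. -/
theorem bpbpnu_of_bpbzp_of_propertyNu (𝕂 : Type*) [RCLike 𝕂] (X : Type*)
    [NormedAddCommGroup X] [NormedSpace 𝕂 X] [CompleteSpace X]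
    (hX : numIndex 𝕂 X = 1) (h₁ : BPBZp 𝕂 X X) (h₂ : PropertyNu 𝕂 X) :
    BPBpNu 𝕂 X := by
  intro ε hε hε1
  obtain ⟨η₂, hη₂, H₂⟩ := h₂ (ε / 2) (by linarith)
  set ε' := min (ε / 2) (η₂ / 2) with hε'def
  have hε' : 0 < ε' := lt_min (by linarith) (by linarith)
  obtain ⟨η₁, hη₁, H₁⟩ := h₁ ε' hε'
  refine ⟨η₁, hη₁, ?_⟩
  intro T z₀ f₀ hνT hz₀ hf₀ hf₀z₀ hbig
  have hTnorm : ‖T‖ = 1 := norm_eq_one_of_numRadius_eq_one hX T hνT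
  obtain ⟨S₁, x₁, y₁, hS₁, hx₁, hy₁, hy₁S₁, hx₁z₀, hy₁f₀, hS₁T⟩ :=
    H₁ T z₀ f₀ hTnorm hz₀ hf₀ hbig
  have key : 1 - η₂ < RCLike.re (y₁ x₁) := by
    have hdec : y₁ x₁ - f₀ z₀ = y₁ (x₁ - z₀) + (y₁ - f₀) z₀ := by
      rw [map_sub, ContinuousLinearMap.sub_apply]; ring
    have h1 : ‖y₁ x₁ - f₀ z₀‖ ≤ ‖x₁ - z₀‖ + ‖y₁ - f₀‖ := by
      calc ‖y₁ x₁ - f₀ z₀‖ = ‖y₁ (x₁ - z₀) + (y₁ - f₀) z₀‖ := by rw [hdec]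
        _ ≤ ‖y₁ (x₁ - z₀)‖ + ‖(y₁ - f₀) z₀‖ := norm_add_le _ _
        _ ≤ ‖y₁‖ * ‖x₁ - z₀‖ + ‖y₁ - f₀‖ * ‖z₀‖ :=
            add_le_add (y₁.le_opNorm _) ((y₁ - f₀).le_opNorm _)
        _ = ‖x₁ - z₀‖ + ‖y₁ - f₀‖ := by rw [hy₁, hz₀]; ring
    have h2 : RCLike.re (f₀ z₀) - RCLike.re (y₁ x₁) ≤ ‖y₁ x₁ - f₀ z₀‖ := by
      have h := RCLike.re_le_norm (f₀ z₀ - y₁ x₁)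
      rw [map_sub] at h
      calc RCLike.re (f₀ z₀) - RCLike.re (y₁ x₁) ≤ ‖f₀ z₀ - y₁ x₁‖ := h
        _ = ‖y₁ x₁ - f₀ z₀‖ := norm_sub_rev _ _
    have hre : RCLike.re (f₀ z₀) = 1 := by rw [hf₀z₀]; simp
    have hε'η : ε' ≤ η₂ / 2 := min_le_right _ _
    linarith
  obtain ⟨S, x₂, f₂, hS, hx₂, hf₂, hf₂S, hf₂x₂, hx₂x₁, hf₂y₁, hSS₁⟩ :=
    H₂ S₁ x₁ y₁ hS₁ hx₁ hy₁ key hy₁S₁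
  have hε'2 : ε' ≤ ε / 2 := min_le_left _ _
  refine ⟨S, x₂, f₂, hx₂, hf₂, hf₂x₂, ?_, hf₂S, ?_, ?_, ?_⟩
  · exact le_antisymm (hS ▸ numRadius_le_norm S) (one_le_numRadius hX S hS)
  · calc ‖S - T‖ ≤ ‖S - S₁‖ + ‖S₁ - T‖ := norm_sub_le_norm_sub_add_norm_sub _ _ _
      _ < ε := by linarith
  · calc ‖x₂ - z₀‖ ≤ ‖x₂ - x₁‖ + ‖x₁ - z₀‖ := norm_sub_le_norm_sub_add_norm_sub _ _ _
      _ < ε := by linarith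
  · calc ‖f₂ - f₀‖ ≤ ‖f₂ - y₁‖ + ‖y₁ - f₀‖ := norm_sub_le_norm_sub_add_norm_sub _ _ _
      _ < ε := by linarith
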